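/- For any two points x, y in Cantor space 2^ω, if x E₀ y (i.e. x(n) = y(n) for all but finitely many n), then there is a finite chain x = z₀, z₁, ..., z_m = y such that each consecutive pair (z_i, z_{i+1}) is a neighbouring pair, i.e. there exist k ∈ ω and z ∈ 2^ω with {z_i, z_{i+1}} = {0^k⌢⟨0⟩⌢z, 0^k⌢⟨1⟩⌢z}. -/

import Mathlib

/-- Concatenation `0^k ⌢ ⟨i⟩ ⌢ z` as a point of Cantor space `2^ω`. -/
def zcat (k : ℕ) (i : Bool) (z : ℕ → Bool) : ℕ → Bool :=
  fun n => if n < k then false else if n = k then i else z (n - k - 1)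

/-- The Vitali equivalence E₀ on `2^ω`. -/
def E0 (x y : ℕ → Bool) : Prop := ∃ N, ∀ n ≥ N, x n = y n

/-- `(x, y)` is a neighbouring pair: `x = 0^k⌢⟨0⟩⌢z`, `y = 0^k⌢⟨1⟩⌢z` or vice versa. -/
def Nbr (x y : ℕ → Bool) : Prop :=
  ∃ k z, (x = zcat k false z ∧ y = zcat k true z) ∨ (x = zcat k true z ∧ y = zcat k false z)

lemma Nbr.symm' : Symmetric Nbr := by
  rintro a b ⟨k, z, h | h⟩
  · exact ⟨k, z, Or.inr ⟨h.2, h.1⟩⟩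
  · exact ⟨k, z, Or.inl ⟨h.2, h.1⟩⟩

lemma chain_zero (x : ℕ → Bool) (N : ℕ) :
    Relation.ReflTransGen Nbr x (fun n => if n < N then false else x n) := by
  induction N with
  | zero => simpa using Relation.ReflTransGen.refl
  | succ N ih =>
    refine ih.trans ?_
    rcases hxN : x N with _ | _
    · have : (fun n => if n < N then false else x n) =
          (fun n => if n < N + 1 then false else x n) := by
        funext n
        rcases lt_trichotomy n N with hn | hn | hn
        · simp [hn, Nat.lt_succ_of_lt hn]
        · subst hn; simp [hxN]
        · have h1 : ¬ n < N := by omega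
          have h2 : ¬ n < N + 1 := by omega
          simp [h1, h2]
      rw [this]
    · refine Relation.ReflTransGen.single ⟨N, fun m => x (m + N + 1), Or.inr ⟨?_, ?_⟩⟩
      · funext n
        simp only [zcat]
        rcases lt_trichotomy n N with hn | hn | hn
        · simp [hn]
        · subst hn; simp [hxN]
        · have h1 : ¬ n < N := Nat.not_lt_of_gt hn
          have h2 : n ≠ N := Nat.ne_of_gt hn
          simp only [h1, h2, if_false]
          congr 1
          omega
      · funext n
        simp only [zcat]
        rcases lt_trichotomy n N with hn | hn | hn
        · simp [hn, Nat.lt_succ_of_lt hn]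
        · subst hn; simp
        · have h1 : ¬ n < N := Nat.not_lt_of_gt hn
          have h2 : n ≠ N := Nat.ne_of_gt hn
          have h3 : ¬ n < N + 1 := by omega
          simp only [h1, h2, h3, if_false]
          congr 1
          omega

/-- If `x E₀ y` then `x` and `y` are connected by a finite chain of neighbouring pairs. -/
theorem stmt0 (x y : ℕ → Bool) (h : E0 x y) : Relation.ReflTransGen Nbr x y := by
  obtain ⟨N, hN⟩ := h
  have hx := chain_zero x N
  have hy := chain_zero y N
  have heq : (fun n => if n < N then false else x n) =
      (fun n => if n < N then false else y n) := by
    funext n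
    by_cases hn : n < N
    · simp [hn]
    · simp only [hn, if_false]
      exact hN n (Nat.le_of_not_lt hn)
  refine hx.trans ?_
  rw [heq]
  haveI : Std.Symm Nbr := ⟨fun a b hab => Nbr.symm' hab⟩
  exact (Relation.ReflTransGen.symmetric (r := Nbr)).symm _ _ hy
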